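/- The angle ω = arccos(1/3) satisfies: ω/π is irrational. Consequently the sequence n·(6ω) mod 2π is equidistributed, and in particular there exist infinitely many n such that cos(6(n+1/2)ω − π/4) ≥ 1/2. -/

import Mathlib

open Real Filter Set

/-- Integer sequence with `a n = 3^n · 2cos(n ω)`. -/
def arccosSeq : ℕ → ℤ
  | 0 => 2
  | 1 => 2
  | (n + 2) => 2 * arccosSeq (n + 1) - 9 * arccosSeq n

lemma arccosSeq_eq (n : ℕ) :
    (arccosSeq n : ℝ) = 3 ^ n * (2 * Real.cos (n * Real.arccos (1 / 3))) := by
  set ω := Real.arccos (1 / 3) with hω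
  have hcos : Real.cos ω = 1 / 3 := Real.cos_arccos (by norm_num) (by norm_num)
  induction n using Nat.twoStepInduction with
  | zero => simp [arccosSeq]
  | one => simp [arccosSeq]; rw [hcos]; norm_num
  | more n ih1 ih2 =>
    have key : Real.cos ((n + 2 : ℕ) * ω) =
        2 * Real.cos ω * Real.cos ((n + 1 : ℕ) * ω) - Real.cos (n * ω) := by
      have h1 : ((n + 2 : ℕ) : ℝ) * ω = (n + 1 : ℕ) * ω + ω := by push_cast; ring
      have h2 : ((n : ℕ) : ℝ) * ω = (n + 1 : ℕ) * ω - ω := by push_cast; ring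
      rw [h1, h2, Real.cos_add, Real.cos_sub]; ring
    have hrec : arccosSeq (n + 2) = 2 * arccosSeq (n + 1) - 9 * arccosSeq n := rfl
    rw [hrec]
    push_cast at key ih1 ih2 ⊢
    rw [ih2, ih1, key, hcos]
    ring

lemma arccosSeq_mod (n : ℕ) : arccosSeq n % 3 = 1 ∨ arccosSeq n % 3 = 2 := by
  induction n using Nat.twoStepInduction with
  | zero => right; rfl
  | one => right; rfl
  | more n ih1 ih2 =>
    have hrec : arccosSeq (n + 2) = 2 * arccosSeq (n + 1) - 9 * arccosSeq n := rfl
    omega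

lemma arccos_third_div_pi_irrational : Irrational (Real.arccos (1 / 3) / Real.pi) := by
  set ω := Real.arccos (1 / 3) with hω
  rw [Irrational]
  rintro ⟨q, hq⟩
  have hπ : (Real.pi : ℝ) ≠ 0 := Real.pi_ne_zero
  rw [eq_div_iff hπ] at hq
  have hωq : ω = (q : ℝ) * Real.pi := hq.symm
  have hden : ((q.den : ℝ)) * (q : ℝ) = (q.num : ℝ) := by
    rw [Rat.cast_def]
    field_simp
  have hval : ((2 * q.den : ℕ) : ℝ) * ω = (q.num : ℝ) * (2 * Real.pi) := by
    push_cast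
    rw [hωq]
    linear_combination 2 * Real.pi * hden
  have hcos1 : Real.cos (((2 * q.den : ℕ) : ℝ) * ω) = 1 := by
    rw [hval]
    exact Real.cos_int_mul_two_pi q.num
  have heq := arccosSeq_eq (2 * q.den)
  rw [hcos1] at heq
  have hz : arccosSeq (2 * q.den) = 2 * 3 ^ (2 * q.den) := by
    have : (arccosSeq (2 * q.den) : ℝ) = ((2 * 3 ^ (2 * q.den) : ℤ) : ℝ) := by
      rw [heq]; push_cast; ring
    exact_mod_cast this
  have h3 : arccosSeq (2 * q.den) % 3 = 0 := by
    rw [hz]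
    obtain ⟨k, hk⟩ : ∃ k, 2 * q.den = k + 1 := ⟨2 * q.den - 1, by have := q.pos; omega⟩
    rw [hk, pow_succ]
    omega
  rcases arccosSeq_mod (2 * q.den) with h | h <;> omega

lemma cos_large_infinite :
    {n : ℕ | (1 : ℝ) / 2 ≤
        Real.cos (6 * ((n : ℝ) + 1 / 2) * Real.arccos (1 / 3) - Real.pi / 4)}.Infinite := by
  set ω := Real.arccos (1 / 3) with hω
  set θ : ℝ := 6 * ω with hθ
  have hπ : (0 : ℝ) < Real.pi := Real.pi_pos
  haveI : Fact (0 < 2 * Real.pi) := ⟨by positivity⟩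
  have hirr : Irrational (θ / (2 * Real.pi)) := by
    have h := arccos_third_div_pi_irrational
    have heq : θ / (2 * Real.pi) = (3 : ℚ) * (ω / Real.pi) := by
      push_cast; rw [hθ]; field_simp; ring
    rw [heq]
    exact h.ratCast_mul (by norm_num)
  have hdense : Dense ((AddSubgroup.closure ({θ, 2 * Real.pi} : Set ℝ) : AddSubgroup ℝ) : Set ℝ) := by
    rcases (AddSubgroup.closure ({θ, 2 * Real.pi} : Set ℝ)).dense_or_cyclic with h | ⟨a, ha⟩
    · exact h
    · exfalso
      have hθmem : θ ∈ AddSubgroup.closure ({θ, 2 * Real.pi} : Set ℝ) :=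
        AddSubgroup.subset_closure (by simp)
      have h2πmem : (2 * Real.pi) ∈ AddSubgroup.closure ({θ, 2 * Real.pi} : Set ℝ) :=
        AddSubgroup.subset_closure (by simp)
      rw [ha, AddSubgroup.mem_closure_singleton] at hθmem h2πmem
      obtain ⟨m, hm⟩ := hθmem
      obtain ⟨k, hk⟩ := h2πmem
      rw [zsmul_eq_mul] at hm hk
      have hk0 : (k : ℝ) ≠ 0 := by
        intro h0
        rw [h0, zero_mul] at hk
        nlinarith
      have ha0 : a ≠ 0 := by
        intro h0
        rw [h0, mul_zero] at hk
        nlinarith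
      apply hirr
      refine ⟨(m : ℚ) / (k : ℚ), ?_⟩
      rw [← hm, ← hk]
      push_cast
      field_simp
  haveI : CompactSpace Real.Angle :=
    inferInstanceAs (CompactSpace (AddCircle (2 * Real.pi)))
  set α : Real.Angle := ((θ : ℝ) : Real.Angle) with hα
  have hmem : ∀ y : ℝ, y ∈ AddSubgroup.closure ({θ, 2 * Real.pi} : Set ℝ) →
      ∃ k : ℤ, k • α = ((y : ℝ) : Real.Angle) := by
    intro y hy
    induction hy using AddSubgroup.closure_induction with
    | mem z hz =>
      rcases hz with rfl | rfl
      · exact ⟨1, one_zsmul α⟩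
      · exact ⟨0, by rw [zero_zsmul]; exact Real.Angle.coe_two_pi.symm⟩
    | zero => exact ⟨0, by rw [zero_zsmul]; exact (Real.Angle.coe_zero).symm⟩
    | add u v hu hv ihu ihv =>
      obtain ⟨m, hm⟩ := ihu
      obtain ⟨k, hk⟩ := ihv
      exact ⟨m + k, by rw [add_zsmul, hm, hk, ← Real.Angle.coe_add]⟩
    | neg u hu ihu =>
      obtain ⟨m, hm⟩ := ihu
      exact ⟨-m, by rw [neg_zsmul, hm, ← Real.Angle.coe_neg]⟩
  have hzd : DenseRange (fun k : ℤ => k • α) := by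
    have hcont : Continuous ((↑) : ℝ → Real.Angle) := continuous_quotient_mk'
    have hsurj : Function.Surjective ((↑) : ℝ → Real.Angle) := Quotient.exists_rep
    have himg : Dense (((↑) : ℝ → Real.Angle) ''
        ((AddSubgroup.closure ({θ, 2 * Real.pi} : Set ℝ) : AddSubgroup ℝ) : Set ℝ)) :=
      hsurj.denseRange.dense_image hcont hdense
    have hsub : (((↑) : ℝ → Real.Angle) ''
        ((AddSubgroup.closure ({θ, 2 * Real.pi} : Set ℝ) : AddSubgroup ℝ) : Set ℝ)) ⊆
        Set.range (fun k : ℤ => k • α) := by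
      rintro x ⟨y, hy, rfl⟩
      obtain ⟨k, hk⟩ := hmem y hy
      exact ⟨k, hk⟩
    intro x
    exact closure_mono hsub (himg x)
  -- cluster point of the ℕ-orbit at the target angle
  set c : ℝ := 3 * ω - Real.pi / 4 with hc
  set y : Real.Angle := ((-c : ℝ) : Real.Angle) with hy
  have hclus : MapClusterPt y atTop (fun n : ℕ => n • α) := by
    rw [mapClusterPt_atTop_nsmul_iff_mem_topologicalClosure_zmultiples]
    have hd : Dense ((AddSubgroup.zmultiples α : AddSubgroup Real.Angle) : Set Real.Angle) := by
      intro x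
      refine closure_mono ?_ (hzd x)
      rintro z ⟨k, rfl⟩
      exact ⟨k, rfl⟩
    exact hd y
  have hF : Continuous (fun z : Real.Angle => Real.Angle.cos (z + ((c : ℝ) : Real.Angle))) :=
    Real.Angle.continuous_cos.comp (continuous_id.add continuous_const)
  have hU : IsOpen ((fun z : Real.Angle => Real.Angle.cos (z + ((c : ℝ) : Real.Angle))) ⁻¹'
      (Set.Ioi (1/2 : ℝ))) := hF.isOpen_preimage _ isOpen_Ioi
  have hyU : y ∈ (fun z : Real.Angle => Real.Angle.cos (z + ((c : ℝ) : Real.Angle))) ⁻¹'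
      (Set.Ioi (1/2 : ℝ)) := by
    simp only [Set.mem_preimage, hy, Set.mem_Ioi]
    rw [← Real.Angle.coe_add]
    norm_num [Real.Angle.cos_coe]
  have hfreq : ∃ᶠ n in atTop, (n • α) ∈
      (fun z : Real.Angle => Real.Angle.cos (z + ((c : ℝ) : Real.Angle))) ⁻¹'
      (Set.Ioi (1/2 : ℝ)) := mapClusterPt_iff_frequently.mp hclus _ (hU.mem_nhds hyU)
  have hfreq2 : ∃ᶠ n in atTop, n ∈ {n : ℕ | (1 : ℝ) / 2 ≤
      Real.cos (6 * ((n : ℝ) + 1 / 2) * ω - Real.pi / 4)} := by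
    refine hfreq.mono ?_
    intro n hn
    simp only [Set.mem_preimage, Set.mem_Ioi] at hn
    have hcast : (n • α) + ((c : ℝ) : Real.Angle) = ((n * θ + c : ℝ) : Real.Angle) := by
      rw [hα, ← Real.Angle.coe_nsmul, ← Real.Angle.coe_add, nsmul_eq_mul]
    rw [hcast, Real.Angle.cos_coe] at hn
    have harg : (n : ℝ) * θ + c = 6 * ((n : ℝ) + 1 / 2) * ω - Real.pi / 4 := by
      rw [hθ, hc]; ring
    rw [harg] at hn
    exact le_of_lt hn
  exact Nat.frequently_atTop_iff_infinite.mp hfreq2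

/-- `ω = arccos(1/3)` satisfies `ω/π` irrational; in particular there are infinitely many
`n` with `cos(6(n+1/2)ω − π/4) ≥ 1/2`. -/
theorem arccos_third_irrational_and_cos_large :
    Irrational (Real.arccos (1 / 3) / Real.pi) ∧
    {n : ℕ | (1 : ℝ) / 2 ≤
        Real.cos (6 * ((n : ℝ) + 1 / 2) * Real.arccos (1 / 3) - Real.pi / 4)}.Infinite := by
  exact ⟨arccos_third_div_pi_irrational, cos_large_infinite⟩
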